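/- Fix an integer k ≥ 1 and m > 0, and let Ψ(u) = ∫_0^u exp(−(m/(k+1)) t^{k+1}) dt and C_β = ∫_0^∞ exp(−(m/(k+1)) t^{k+1}) dt. For s ∈ (0,1) let t_s ≥ 0 be the unique nonnegative real number with Ψ(t_s) = (1−s) C_β. Then Ψ'(t_s) · t_s / ( s · (−ln s) ) → (k+1) · C_β as s → 0⁺, where Ψ'(t) = exp(−(m/(k+1)) t^{k+1}). -/

import Mathlib

open MeasureTheory Filter Set
open scoped Topology

/-- `Ψ(u) = ∫₀ᵘ exp(−(m/(k+1)) t^{k+1}) dt`, the change of variables in the model case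
`β(s) = s^k`. -/
noncomputable def PsiK (k : ℕ) (m : ℝ) (u : ℝ) : ℝ :=
  ∫ t in (0:ℝ)..u, Real.exp (-(m / ((k:ℝ) + 1)) * t ^ (k + 1))

/-- `C_β = ∫₀^∞ exp(−(m/(k+1)) t^{k+1}) dt`. -/
noncomputable def CbetaK (k : ℕ) (m : ℝ) : ℝ :=
  ∫ t in Set.Ioi (0:ℝ), Real.exp (-(m / ((k:ℝ) + 1)) * t ^ (k + 1))

/-- `Ψ'(u) = exp(−(m/(k+1)) u^{k+1})`. -/
noncomputable def PsiK' (k : ℕ) (m : ℝ) (u : ℝ) : ℝ :=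
  Real.exp (-(m / ((k:ℝ) + 1)) * u ^ (k + 1))

namespace Stmt14Aux

/-- The tail integral `T(t) = ∫_t^∞ Ψ'`. -/
noncomputable def TK (k : ℕ) (m : ℝ) (t : ℝ) : ℝ := ∫ u in Set.Ioi t, PsiK' k m u

variable {k : ℕ} {m : ℝ}

lemma psiK'_pos (k : ℕ) (m : ℝ) (t : ℝ) : 0 < PsiK' k m t := Real.exp_pos _

lemma psiK'_cont (k : ℕ) (m : ℝ) : Continuous (PsiK' k m) := by
  unfold PsiK'; fun_prop

lemma a_pos (k : ℕ) (hm : 0 < m) : 0 < m / ((k:ℝ) + 1) := by positivity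

lemma integrable0 (hm : 0 < m) : IntegrableOn (PsiK' k m) (Set.Ioi (0:ℝ)) := by
  have ha : 0 < m / ((k:ℝ) + 1) := a_pos k hm
  have h1 : IntegrableOn (PsiK' k m) (Set.Ioc (0:ℝ) 1) :=
    (psiK'_cont k m).integrableOn_Ioc
  have h2 : IntegrableOn (PsiK' k m) (Set.Ioi (1:ℝ)) := by
    refine (exp_neg_integrableOn_Ioi 1 ha).mono' ((psiK'_cont k m).aestronglyMeasurable) ?_
    rw [ae_restrict_iff' measurableSet_Ioi]
    filter_upwards with x hx
    have hx1 : (1:ℝ) ≤ x := le_of_lt hx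
    have hxp : x ≤ x ^ (k + 1) := le_self_pow₀ hx1 (Nat.succ_ne_zero k)
    have : -(m / ((k:ℝ) + 1)) * x ^ (k+1) ≤ -(m / ((k:ℝ) + 1)) * x := by nlinarith
    simpa [PsiK', Real.norm_eq_abs, abs_of_pos (Real.exp_pos _)] using Real.exp_le_exp.2 this
  have := h1.union h2
  rwa [Set.Ioc_union_Ioi_eq_Ioi (by norm_num : (0:ℝ) ≤ 1)] at this

lemma integrableOn_Ioi (hm : 0 < m) {t : ℝ} (ht : 0 ≤ t) :
    IntegrableOn (PsiK' k m) (Set.Ioi t) :=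
  (integrable0 hm).mono_set (Set.Ioi_subset_Ioi ht)

lemma T_pos (hm : 0 < m) {t : ℝ} (ht : 0 ≤ t) : 0 < TK k m t := by
  rw [TK, setIntegral_pos_iff_support_of_nonneg_ae
    (Filter.Eventually.of_forall fun x => (psiK'_pos k m x).le) (integrableOn_Ioi hm ht)]
  have : Function.support (PsiK' k m) = Set.univ := by
    ext x; simp [Function.mem_support, (psiK'_pos k m x).ne']
  rw [this, Set.univ_inter]
  simp

lemma C_eq : CbetaK k m = TK k m 0 := rfl

lemma C_pos (hm : 0 < m) : 0 < CbetaK k m := C_eq ▸ T_pos hm le_rfl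

lemma T_eq (hm : 0 < m) {t : ℝ} (ht : 0 ≤ t) :
    TK k m t = CbetaK k m - PsiK k m t := by
  have hsplit : (∫ u in Set.Ioi (0:ℝ), PsiK' k m u)
      = (∫ u in Set.Ioc (0:ℝ) t, PsiK' k m u) + TK k m t := by
    rw [← Set.Ioc_union_Ioi_eq_Ioi ht]
    exact setIntegral_union (Set.Ioc_disjoint_Ioi le_rfl) measurableSet_Ioi
      ((psiK'_cont k m).integrableOn_Ioc) (integrableOn_Ioi hm ht)
  have h2 : PsiK k m t = ∫ u in Set.Ioc (0:ℝ) t, PsiK' k m u :=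
    intervalIntegral.integral_of_le ht
  have h3 : CbetaK k m = ∫ u in Set.Ioi (0:ℝ), PsiK' k m u := rfl
  rw [h3, hsplit, h2]
  ring

lemma T_anti (hm : 0 < m) {t₁ t₂ : ℝ} (h0 : 0 ≤ t₁) (h : t₁ ≤ t₂) :
    TK k m t₂ ≤ TK k m t₁ := by
  refine setIntegral_mono_set (integrableOn_Ioi hm h0)
    (Filter.Eventually.of_forall fun x => (psiK'_pos k m x).le) ?_
  exact HasSubset.Subset.eventuallyLE (Set.Ioi_subset_Ioi h)

lemma psiK_tendsto (hm : 0 < m) :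
    Tendsto (PsiK k m) atTop (𝓝 (CbetaK k m)) :=
  intervalIntegral_tendsto_integral_Ioi 0 (integrable0 hm) tendsto_id

lemma T_tendsto_zero (hm : 0 < m) : Tendsto (TK k m) atTop (𝓝 0) := by
  have h := (tendsto_const_nhds (x := CbetaK k m)).sub (psiK_tendsto (k := k) hm)
  rw [sub_self] at h
  refine h.congr' ?_
  filter_upwards [eventually_ge_atTop (0:ℝ)] with t ht
  exact (T_eq hm ht).symm

lemma psiK'_hasDeriv (hm : 0 < m) (t : ℝ) :
    HasDerivAt (PsiK' k m) (-(m * t ^ k) * PsiK' k m t) t := by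
  have hk1 : ((k:ℝ) + 1) ≠ 0 := by positivity
  have h1 : HasDerivAt (fun t : ℝ => -(m / ((k:ℝ) + 1)) * t ^ (k+1))
      (-(m / ((k:ℝ) + 1)) * (((k:ℝ)+1) * t ^ k)) t := by
    have := (hasDerivAt_pow (k+1) t).const_mul (-(m / ((k:ℝ) + 1)))
    simpa using this
  have h2 : HasDerivAt (PsiK' k m) _ t := h1.exp
  convert h2 using 1
  unfold PsiK'
  field_simp

lemma psiK_hasDeriv (hm : 0 < m) (t : ℝ) :
    HasDerivAt (PsiK k m) (PsiK' k m t) t := by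
  exact intervalIntegral.integral_hasDerivAt_right
    ((psiK'_cont k m).intervalIntegrable _ _)
    ((psiK'_cont k m).stronglyMeasurable.stronglyMeasurableAtFilter)
    (psiK'_cont k m).continuousAt

lemma T_hasDeriv (hm : 0 < m) {t : ℝ} (ht : 0 < t) :
    HasDerivAt (TK k m) (-(PsiK' k m t)) t := by
  have h1 : HasDerivAt (fun u => CbetaK k m - PsiK k m u) (-(PsiK' k m t)) t :=
    (psiK_hasDeriv hm t).const_sub _
  refine h1.congr_of_eventuallyEq ?_
  filter_upwards [isOpen_Ioi.mem_nhds ht] with u hu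
  exact T_eq hm (le_of_lt hu)


lemma G_hasDeriv (hk : 1 ≤ k) (hm : 0 < m) {t : ℝ} (ht : 0 < t) :
    HasDerivAt (fun t => PsiK' k m t / (m * t ^ k))
      (-(PsiK' k m t) * (1 + (k:ℝ) / (m * t ^ (k+1)))) t := by
  obtain ⟨j, rfl⟩ : ∃ j, k = j + 1 := ⟨k - 1, (Nat.succ_pred_eq_of_pos hk).symm⟩
  have hd : HasDerivAt (fun t : ℝ => m * t ^ (j+1)) (m * (((j:ℝ)+1) * t ^ j)) t := by
    have := (hasDerivAt_pow (j+1) t).const_mul m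
    simpa [mul_comm] using this
  have h : HasDerivAt (fun t => PsiK' (j+1) m t / (m * t ^ (j+1))) _ t :=
    (psiK'_hasDeriv (k := j+1) hm t).div hd (by positivity)
  convert h using 1
  have h1 : PsiK' (j+1) m t ≠ 0 := (psiK'_pos _ m t).ne'
  field_simp
  push_cast
  ring

lemma psiK'_tendsto_zero (hm : 0 < m) :
    Tendsto (fun t : ℝ => PsiK' k m t) atTop (𝓝 0) := by
  have h : Tendsto (fun t : ℝ => -(m/((k:ℝ)+1)) * t ^ (k+1)) atTop atBot :=
    Tendsto.const_mul_atTop_of_neg (neg_lt_zero.2 (a_pos k hm))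
      (tendsto_pow_atTop (Nat.succ_ne_zero k))
  exact Real.tendsto_exp_atBot.comp h

lemma mt_atTop (hm : 0 < m) (n : ℕ) (hn : n ≠ 0) :
    Tendsto (fun t : ℝ => m * t ^ n) atTop atTop :=
  Tendsto.const_mul_atTop hm (tendsto_pow_atTop hn)

lemma ratio_tendsto (hk : 1 ≤ k) (hm : 0 < m) :
    Tendsto (fun t => TK k m t / (PsiK' k m t / (m * t ^ k))) atTop (𝓝 1) := by
  apply HasDerivAt.lhopital_zero_atTop
    (f' := fun t => -(PsiK' k m t))
    (g' := fun t => -(PsiK' k m t) * (1 + (k:ℝ) / (m * t ^ (k+1))))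
  · filter_upwards [eventually_gt_atTop (0:ℝ)] with t ht; exact T_hasDeriv hm ht
  · filter_upwards [eventually_gt_atTop (0:ℝ)] with t ht; exact G_hasDeriv hk hm ht
  · filter_upwards [eventually_gt_atTop (0:ℝ)] with t ht
    have h1 : (0:ℝ) < 1 + (k:ℝ) / (m * t ^ (k+1)) := by positivity
    exact mul_ne_zero (neg_ne_zero.2 (psiK'_pos k m t).ne') h1.ne'
  · exact T_tendsto_zero hm
  · exact (psiK'_tendsto_zero hm).div_atTop
      (mt_atTop hm k (by omega))
  · have h : Tendsto (fun t : ℝ => 1 + (k:ℝ) / (m * t ^ (k+1))) atTop (𝓝 1) := by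
      have h0 : Tendsto (fun t : ℝ => (k:ℝ) / (m * t ^ (k+1))) atTop (𝓝 0) :=
        tendsto_const_nhds.div_atTop (mt_atTop hm (k+1) (Nat.succ_ne_zero k))
      simpa using (tendsto_const_nhds (x := (1:ℝ))).add h0
    have h2 : Tendsto (fun t : ℝ => (1 + (k:ℝ) / (m * t ^ (k+1)))⁻¹) atTop (𝓝 1) := by
      simpa using h.inv₀ one_ne_zero
    refine h2.congr' ?_
    filter_upwards [eventually_gt_atTop (0:ℝ)] with t ht
    have h1 : (0:ℝ) < 1 + (k:ℝ) / (m * t ^ (k+1)) := by positivity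
    have h3 : PsiK' k m t ≠ 0 := (psiK'_pos k m t).ne'
    field_simp


/-- `R(t) = T(t) m t^k / Ψ'(t)`, which tends to `1` at infinity. -/
noncomputable def RK (k : ℕ) (m : ℝ) (t : ℝ) : ℝ :=
  TK k m t * (m * t ^ k) / PsiK' k m t

lemma R_tendsto (hk : 1 ≤ k) (hm : 0 < m) : Tendsto (RK k m) atTop (𝓝 1) := by
  refine (ratio_tendsto hk hm).congr fun t => ?_
  rw [RK, div_div_eq_mul_div]

lemma R_pos (hm : 0 < m) {t : ℝ} (ht : 0 < t) : 0 < RK k m t :=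
  div_pos (mul_pos (T_pos hm ht.le) (by positivity)) (psiK'_pos k m t)

lemma T_formula (hm : 0 < m) {t : ℝ} (ht : 0 < t) :
    TK k m t = RK k m t * PsiK' k m t / (m * t ^ k) := by
  rw [RK]
  have h1 : PsiK' k m t ≠ 0 := (psiK'_pos k m t).ne'
  have h2 : m * t ^ k ≠ 0 := by positivity
  field_simp

lemma logT (hm : 0 < m) {t : ℝ} (ht : 0 < t) :
    Real.log (TK k m t / CbetaK k m) = Real.log (RK k m t) - (m / ((k:ℝ)+1)) * t ^ (k+1)
      - Real.log m - (k:ℝ) * Real.log t - Real.log (CbetaK k m) := by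
  have hT := T_pos (k := k) hm ht.le
  have hC := C_pos (k := k) hm
  have hR := R_pos (k := k) hm ht
  have hg := psiK'_pos k m t
  have h2 : m * t ^ k ≠ 0 := by positivity
  rw [Real.log_div hT.ne' hC.ne', T_formula hm ht,
    Real.log_div (mul_ne_zero hR.ne' hg.ne') h2,
    Real.log_mul hR.ne' hg.ne', Real.log_mul hm.ne' (by positivity : t ^ k ≠ 0),
    Real.log_pow, PsiK', Real.log_exp]
  ring

lemma log_div_pow_tendsto :
    Tendsto (fun t : ℝ => Real.log t / t ^ (k+1)) atTop (𝓝 0) := by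
  have h := (isLittleO_log_rpow_atTop
    (r := ((k:ℝ)+1)) (by positivity)).tendsto_div_nhds_zero
  refine h.congr' ?_
  filter_upwards [eventually_gt_atTop (0:ℝ)] with t ht
  have : ((k:ℝ)+1) = ((k+1 : ℕ) : ℝ) := by push_cast; ring
  rw [this, Real.rpow_natCast]

lemma L_tendsto (hk : 1 ≤ k) (hm : 0 < m) :
    Tendsto (fun t : ℝ => (-Real.log (TK k m t / CbetaK k m)) / ((m / ((k:ℝ)+1)) * t ^ (k+1)))
      atTop (𝓝 1) := by
  have ha : 0 < m / ((k:ℝ)+1) := a_pos k hm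
  have hD : Tendsto (fun t : ℝ => (m / ((k:ℝ)+1)) * t ^ (k+1)) atTop atTop :=
    Tendsto.const_mul_atTop ha (tendsto_pow_atTop (Nat.succ_ne_zero k))
  have hlogR : Tendsto (fun t => Real.log (RK k m t)) atTop (𝓝 0) := by
    have := (Real.continuousAt_log one_ne_zero).tendsto.comp (R_tendsto hk hm)
    simpa [Function.comp_def] using this
  have h1 : Tendsto (fun t : ℝ =>
      (Real.log m + Real.log (CbetaK k m) - Real.log (RK k m t)) / ((m / ((k:ℝ)+1)) * t ^ (k+1)))
      atTop (𝓝 0) :=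
    Tendsto.div_atTop (by simpa using (tendsto_const_nhds
      (x := Real.log m + Real.log (CbetaK k m))).sub hlogR) hD
  have h2 : Tendsto (fun t : ℝ => ((k:ℝ) / (m / ((k:ℝ)+1))) * (Real.log t / t ^ (k+1)))
      atTop (𝓝 0) := by
    simpa using (log_div_pow_tendsto (k := k)).const_mul ((k:ℝ) / (m / ((k:ℝ)+1)))
  have h3 := ((tendsto_const_nhds (x := (1:ℝ))).add (h1.add h2))
  rw [add_zero, add_zero] at h3
  refine h3.congr' ?_
  filter_upwards [eventually_gt_atTop (0:ℝ)] with t ht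
  rw [logT hm ht]
  have hD0 : (m / ((k:ℝ)+1)) * t ^ (k+1) ≠ 0 := by positivity
  have ht' : t ≠ 0 := ht.ne'
  field_simp
  ring

end Stmt14Aux

theorem stmt14 (k : ℕ) (hk : 1 ≤ k) (m : ℝ) (hm : 0 < m)
    (ts : ℝ → ℝ)
    (hts : ∀ s ∈ Set.Ioo (0:ℝ) 1, 0 ≤ ts s ∧ PsiK k m (ts s) = (1 - s) * CbetaK k m) :
    Tendsto (fun s : ℝ => PsiK' k m (ts s) * ts s / (s * (-Real.log s)))
      (𝓝[>] (0:ℝ)) (𝓝 (((k:ℝ) + 1) * CbetaK k m)) := by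
  open Stmt14Aux in
  have hC : 0 < CbetaK k m := Stmt14Aux.C_pos hm
  have hts_top : Tendsto ts (𝓝[>] (0:ℝ)) atTop := by
    rw [tendsto_atTop]
    intro M
    have hM0 : (0:ℝ) ≤ max M 0 := le_max_right _ _
    have hTM : 0 < Stmt14Aux.TK k m (max M 0) := Stmt14Aux.T_pos hm hM0
    have hmem : Set.Ioo (0:ℝ) (min (Stmt14Aux.TK k m (max M 0) / CbetaK k m) 1) ∈ 𝓝[>] (0:ℝ) :=
      Ioo_mem_nhdsGT_of_mem ⟨le_rfl, by positivity⟩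
    filter_upwards [hmem] with s hs
    have hs1 : s ∈ Set.Ioo (0:ℝ) 1 := ⟨hs.1, lt_of_lt_of_le hs.2 (min_le_right _ _)⟩
    obtain ⟨hts0, htsPsi⟩ := hts s hs1
    have hTts : Stmt14Aux.TK k m (ts s) = s * CbetaK k m := by
      rw [Stmt14Aux.T_eq hm hts0, htsPsi]; ring
    by_contra hcon
    push_neg at hcon
    have hle : ts s ≤ max M 0 := le_trans hcon.le (le_max_left _ _)
    have h1 : Stmt14Aux.TK k m (max M 0) ≤ Stmt14Aux.TK k m (ts s) :=
      Stmt14Aux.T_anti hm hts0 hle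
    have h2 : s * CbetaK k m < Stmt14Aux.TK k m (max M 0) := by
      have := mul_lt_mul_of_pos_right (lt_of_lt_of_le hs.2 (min_le_left _ _)) hC
      rwa [div_mul_cancel₀ _ hC.ne'] at this
    rw [hTts] at h1; linarith
  have hF : Tendsto (fun t => (((k:ℝ)+1) * CbetaK k m) / (Stmt14Aux.RK k m t *
      ((-Real.log (Stmt14Aux.TK k m t / CbetaK k m)) / ((m / ((k:ℝ)+1)) * t ^ (k+1)))))
      atTop (𝓝 (((k:ℝ)+1) * CbetaK k m)) := by
    have h := (tendsto_const_nhds (x := ((k:ℝ)+1) * CbetaK k m)).div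
      ((Stmt14Aux.R_tendsto hk hm).mul (Stmt14Aux.L_tendsto hk hm)) (by norm_num)
    simpa [Pi.div_def] using h
  refine (hF.comp hts_top).congr' ?_
  filter_upwards [Ioo_mem_nhdsGT_of_mem (by exact ⟨le_rfl, one_pos⟩),
    hts_top.eventually (eventually_ge_atTop (1:ℝ))] with s hs hts1
  obtain ⟨hts0, htsPsi⟩ := hts s hs
  have ht0 : (0:ℝ) < ts s := lt_of_lt_of_le one_pos hts1
  have hTts : Stmt14Aux.TK k m (ts s) = s * CbetaK k m := by
    rw [Stmt14Aux.T_eq hm hts0, htsPsi]; ring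
  have hsC : Stmt14Aux.TK k m (ts s) / CbetaK k m = s := by
    rw [hTts]; field_simp
  have hlogs : Real.log s < 0 := Real.log_neg hs.1 hs.2
  have hg : 0 < PsiK' k m (ts s) := Stmt14Aux.psiK'_pos k m (ts s)
  simp only [Function.comp_apply, Stmt14Aux.RK, hsC, hTts]
  have hs0 : s ≠ 0 := hs.1.ne'
  have hlogs0 : Real.log s ≠ 0 := hlogs.ne
  have hg0 : PsiK' k m (ts s) ≠ 0 := hg.ne'
  have ht0' : ts s ≠ 0 := ht0.ne'
  have hk1 : ((k:ℝ)+1) ≠ 0 := by positivity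
  field_simp
  ring
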